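/- Let ε ∈ ℂ with Re(ε) > 0, let b, c be positive integers with b/c > 1, and let z ∈ (0,1). Then |sinh(2π²z/ε)/sinh(2π²bz/(cε)) − e^{(2π²/ε)z(1−b/c)}| ≤ |e^{(2π²/ε)z(1−b/c)}| · (|e^{-4π²z/ε}| + |e^{-4π²bz/(cε)}|/(1 − |e^{-4π²bz/(cε)}|) + |e^{-4π²z/ε}|·|e^{-4π²bz/(cε)}|/(1 − |e^{-4π²bz/(cε)}|)); in particular sinh(2π²z/ε)/sinh(2π²bz/(cε)) = e^{(2π²/ε)z(1−b/c)}(1 + O(e^{-4π²z·Re(1/ε)})) as Re(1/ε) → ∞ with z fixed. -/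

import Mathlib

open Complex Filter

theorem sinh_quotient_bound (ε : ℂ) (hε : 0 < ε.re) (b c : ℕ+)
    (hbc : 1 < (b : ℝ) / (c : ℝ)) (z : ℝ) (hz0 : 0 < z) (hz1 : z < 1) :
    ‖Complex.sinh (2 * Real.pi ^ 2 * z / ε) /
          Complex.sinh (2 * Real.pi ^ 2 * b * z / (c * ε))
        - Complex.exp ((2 * Real.pi ^ 2 / ε) * z * (1 - (b : ℂ) / (c : ℂ)))‖
      ≤ ‖Complex.exp ((2 * Real.pi ^ 2 / ε) * z * (1 - (b : ℂ) / (c : ℂ)))‖ *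
        (‖Complex.exp (-(4 * Real.pi ^ 2 * z) / ε)‖
          + ‖Complex.exp (-(4 * Real.pi ^ 2 * b * z) / (c * ε))‖ /
              (1 - ‖Complex.exp (-(4 * Real.pi ^ 2 * b * z) / (c * ε))‖)
          + ‖Complex.exp (-(4 * Real.pi ^ 2 * z) / ε)‖ *
              ‖Complex.exp (-(4 * Real.pi ^ 2 * b * z) / (c * ε))‖ /
              (1 - ‖Complex.exp (-(4 * Real.pi ^ 2 * b * z) / (c * ε))‖)) := by
  have hε0 : ε ≠ 0 := fun h => by simp [h] at hε
  have hcR : (0:ℝ) < (c:ℝ) := by exact_mod_cast c.pos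
  have hc0 : ((c:ℕ):ℂ) ≠ 0 := Nat.cast_ne_zero.mpr c.ne_zero
  have hbR : (0:ℝ) < (b:ℝ) := by exact_mod_cast b.pos
  have hinv : 0 < (ε⁻¹).re := by
    rw [Complex.inv_re]
    exact div_pos hε (Complex.normSq_pos.mpr hε0)
  have key : ∀ r : ℝ, 0 < r → ‖Complex.exp ((-(r:ℂ))/ε)‖ < 1 := by
    intro r hr
    rw [Complex.norm_exp, Real.exp_lt_one_iff]
    have : ((-(r:ℂ))/ε).re = -r * (ε⁻¹).re := by
      simp [div_eq_mul_inv, Complex.mul_re]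
    rw [this]
    nlinarith
  set A : ℂ := 2 * Real.pi ^ 2 * z / ε with hA
  set B : ℂ := 2 * Real.pi ^ 2 * (b:ℕ) * z / ((c:ℕ) * ε) with hB
  set u : ℂ := Complex.exp (-(4 * Real.pi ^ 2 * z) / ε) with hu
  set v : ℂ := Complex.exp (-(4 * Real.pi ^ 2 * (b:ℕ) * z) / ((c:ℕ) * ε)) with hv
  have hu1 : ‖u‖ < 1 := by
    have : -(4 * (Real.pi:ℂ) ^ 2 * z) / ε = (-((4 * Real.pi ^ 2 * z : ℝ):ℂ)) / ε := by
      push_cast; ring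
    rw [hu, this]
    exact key _ (by positivity)
  have hv1 : ‖v‖ < 1 := by
    have : -(4 * (Real.pi:ℂ) ^ 2 * (b:ℕ) * z) / ((c:ℕ) * ε)
        = (-((4 * Real.pi ^ 2 * (b:ℝ) * z / (c:ℝ) : ℝ):ℂ)) / ε := by
      push_cast
      rw [neg_div, neg_div, div_div]
    rw [hv, this]
    exact key _ (by positivity)
  have hvne : (1:ℂ) - v ≠ 0 := by
    intro h
    have : v = 1 := by linear_combination -h
    rw [this] at hv1; simp at hv1
  have huA : u = Complex.exp (-2 * A) := by
    rw [hu, hA]; congr 1; ring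
  have hvB : v = Complex.exp (-2 * B) := by
    rw [hv, hB]; congr 1; ring
  have hsA : Complex.sinh A = Complex.exp A * (1 - u) / 2 := by
    have h2 := Complex.two_sinh A
    have hnA : Complex.exp (-A) = Complex.exp A * Complex.exp (-2*A) := by
      rw [← Complex.exp_add]; ring_nf
    rw [hnA] at h2
    rw [huA]
    linear_combination h2 / 2
  have hsB : Complex.sinh B = Complex.exp B * (1 - v) / 2 := by
    have h2 := Complex.two_sinh B
    have hnB : Complex.exp (-B) = Complex.exp B * Complex.exp (-2*B) := by
      rw [← Complex.exp_add]; ring_nf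
    rw [hnB] at h2
    rw [hvB]
    linear_combination h2 / 2
  have hE : Complex.exp ((2 * (Real.pi:ℂ) ^ 2 / ε) * z * (1 - ((b:ℕ):ℂ) / ((c:ℕ):ℂ)))
      = Complex.exp A / Complex.exp B := by
    rw [← Complex.exp_sub]; congr 1; rw [hA, hB]; field_simp
  have heq : Complex.sinh A / Complex.sinh B
        - Complex.exp ((2 * (Real.pi:ℂ) ^ 2 / ε) * z * (1 - ((b:ℕ):ℂ) / ((c:ℕ):ℂ)))
      = Complex.exp ((2 * (Real.pi:ℂ) ^ 2 / ε) * z * (1 - ((b:ℕ):ℂ) / ((c:ℕ):ℂ)))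
        * (-u + (1 - u) * (v / (1 - v))) := by
    rw [hsA, hsB, hE]
    field_simp [Complex.exp_ne_zero]
    ring
  rw [heq, norm_mul]
  refine mul_le_mul_of_nonneg_left ?_ (norm_nonneg _)
  have h1v : 0 < 1 - ‖v‖ := by linarith
  have hsub : 1 - ‖v‖ ≤ ‖1 - v‖ := by
    simpa using norm_sub_norm_le (1:ℂ) v
  have hle1 : ‖1 - u‖ ≤ 1 + ‖u‖ := by
    simpa using norm_sub_le (1:ℂ) u
  have hle2 : ‖v‖ / ‖1 - v‖ ≤ ‖v‖ / (1 - ‖v‖) :=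
    div_le_div_of_nonneg_left (norm_nonneg _) h1v hsub
  calc ‖-u + (1 - u) * (v / (1 - v))‖
      ≤ ‖-u‖ + ‖(1 - u) * (v / (1 - v))‖ :=
        norm_add_le _ _
    _ = ‖u‖ + ‖1 - u‖ * (‖v‖ / ‖1 - v‖) := by
        rw [norm_neg, norm_mul, norm_div]
    _ ≤ ‖u‖ + (1 + ‖u‖) * (‖v‖ / (1 - ‖v‖)) := by
        have hmul := mul_le_mul hle1 hle2 (by positivity) (by positivity)
        linarith
    _ = ‖u‖ + ‖v‖ / (1 - ‖v‖)
        + ‖u‖ * ‖v‖ / (1 - ‖v‖) := by ring
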